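/- For every real number x with 0 < |x| < 1, one has (√(1+x²) − 1) / (x √(1+x²)) = Σ_{k≥1} ((−1)^{k+1} (2k−1)! / (2^{2k−1} (k−1)! k!)) x^{2k−1}, the series converging absolutely. -/

import Mathlib

open Polynomial Finset

/-- coefficient `(-1)^k (2k)! / (4^k k! k!)`, i.e. `binom(-1/2, k)`. -/
noncomputable def sqrtSeriesCoeff (k : ℕ) : ℝ :=
  (-1) ^ k * (Nat.factorial (2 * k) : ℝ) /
    (4 ^ k * (Nat.factorial k) * (Nat.factorial k))

lemma descPochhammer_smeval_neg_half (k : ℕ) :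
    (descPochhammer ℤ k).smeval (-(1/2) : ℝ) =
      (-1) ^ k * (Nat.factorial (2 * k) : ℝ) / (4 ^ k * (Nat.factorial k)) := by
  induction k with
  | zero => simp [descPochhammer]
  | succ k ih =>
    rw [descPochhammer_succ_right, smeval_mul, ih, smeval_sub, smeval_X, smeval_natCast]
    have h2 : (2 * (k+1)) = (2*k) + 1 + 1 := by ring
    rw [h2]
    have hk : (Nat.factorial k : ℝ) ≠ 0 := Nat.cast_ne_zero.mpr (Nat.factorial_ne_zero k)
    simp only [Nat.factorial_succ, pow_succ, pow_one, Nat.cast_mul, Nat.cast_add, Nat.cast_one,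
      nsmul_eq_mul, mul_one]
    field_simp
    ring

lemma ring_choose_neg_half (k : ℕ) :
    Ring.choose (-(1/2) : ℝ) k = sqrtSeriesCoeff k := by
  have h := Ring.descPochhammer_eq_factorial_smul_choose (-(1/2) : ℝ) k
  rw [descPochhammer_smeval_neg_half, nsmul_eq_mul] at h
  have hk : (Nat.factorial k : ℝ) ≠ 0 := Nat.cast_ne_zero.mpr (Nat.factorial_ne_zero k)
  rw [sqrtSeriesCoeff]
  field_simp at h ⊢
  linarith [h]

lemma descPochhammer_smeval_neg_one (k : ℕ) :
    (descPochhammer ℤ k).smeval (-1 : ℝ) = (-1) ^ k * (Nat.factorial k : ℝ) := by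
  induction k with
  | zero => simp [descPochhammer]
  | succ k ih =>
    rw [descPochhammer_succ_right, smeval_mul, ih, smeval_sub, smeval_X, smeval_natCast]
    simp only [Nat.factorial_succ, pow_succ, Nat.cast_mul, Nat.cast_add, Nat.cast_one,
      nsmul_eq_mul, mul_one, pow_one]
    ring

lemma ring_choose_neg_one (k : ℕ) : Ring.choose (-1 : ℝ) k = (-1) ^ k := by
  have h := Ring.descPochhammer_eq_factorial_smul_choose (-1 : ℝ) k
  rw [descPochhammer_smeval_neg_one, nsmul_eq_mul] at h
  have hk : (Nat.factorial k : ℝ) ≠ 0 := Nat.cast_ne_zero.mpr (Nat.factorial_ne_zero k)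
  exact mul_left_cancel₀ hk (h.symm.trans (mul_comm _ _))

lemma sqrtSeriesCoeff_conv (n : ℕ) :
    ∑ ij ∈ antidiagonal n, sqrtSeriesCoeff ij.1 * sqrtSeriesCoeff ij.2 = (-1) ^ n := by
  have h := Ring.add_choose_eq (r := (-(1/2) : ℝ)) (s := (-(1/2) : ℝ)) n (Commute.all _ _)
  have : (-(1/2) : ℝ) + (-(1/2)) = -1 := by norm_num
  rw [this, ring_choose_neg_one] at h
  have h2 : ∑ ij ∈ antidiagonal n, sqrtSeriesCoeff ij.1 * sqrtSeriesCoeff ij.2 =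
      ∑ ij ∈ antidiagonal n, Ring.choose (-(1/2) : ℝ) ij.1 * Ring.choose (-(1/2) : ℝ) ij.2 :=
    Finset.sum_congr rfl fun ij _ => by rw [ring_choose_neg_half, ring_choose_neg_half]
  rw [h2, ← h]

lemma abs_sqrtSeriesCoeff (k : ℕ) :
    |sqrtSeriesCoeff k| = (Nat.factorial (2 * k) : ℝ) /
      (4 ^ k * (Nat.factorial k) * (Nat.factorial k)) := by
  rw [sqrtSeriesCoeff, abs_div, abs_mul, abs_pow, abs_neg, abs_one, one_pow, one_mul]
  congr 1
  · exact abs_of_nonneg (by positivity)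
  · exact abs_of_nonneg (by positivity)

lemma abs_sqrtSeriesCoeff_le_one (k : ℕ) : |sqrtSeriesCoeff k| ≤ 1 := by
  rw [abs_sqrtSeriesCoeff]
  rw [div_le_one (by positivity)]
  have h : Nat.factorial (2*k) ≤ 4 ^ k * Nat.factorial k * Nat.factorial k := by
    have hc : (2*k).choose k ≤ 4 ^ k := by
      calc (2*k).choose k ≤ ∑ m ∈ range (2*k + 1), (2*k).choose m :=
            Finset.single_le_sum (fun i _ => Nat.zero_le _)
              (by simp [Finset.mem_range]; omega)
        _ = 2 ^ (2*k) := Nat.sum_range_choose (2*k)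
        _ = 4 ^ k := by rw [pow_mul]; norm_num
    have := Nat.choose_mul_factorial_mul_factorial (Nat.le_mul_of_pos_left k (by norm_num) : k ≤ 2*k)
    have h2 : 2*k - k = k := by omega
    rw [h2] at this
    calc Nat.factorial (2*k) = (2*k).choose k * Nat.factorial k * Nat.factorial k := this.symm
      _ ≤ 4 ^ k * Nat.factorial k * Nat.factorial k := by
          exact Nat.mul_le_mul_right _ (Nat.mul_le_mul_right _ hc)
  exact_mod_cast Nat.cast_le.mpr h

lemma sqrtSeriesCoeff_succ (k : ℕ) :
    sqrtSeriesCoeff (k+1) = sqrtSeriesCoeff k * (-((2*k+1) / (2*k+2))) := by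
  rw [sqrtSeriesCoeff, sqrtSeriesCoeff]
  have h2 : 2 * (k+1) = 2*k+1+1 := by ring
  rw [h2]
  have hf : (((2*k+1+1).factorial : ℕ) : ℝ) = (2*(k:ℝ)+2)*(2*(k:ℝ)+1)*((2*k).factorial : ℕ) := by
    rw [Nat.factorial_succ, Nat.factorial_succ]; push_cast; ring
  have hf2 : (((k+1).factorial : ℕ) : ℝ) = ((k:ℝ)+1)*(k.factorial : ℕ) := by
    rw [Nat.factorial_succ]; push_cast; ring
  rw [hf, hf2]
  have hk : ((k.factorial : ℕ) : ℝ) ≠ 0 := Nat.cast_ne_zero.mpr (Nat.factorial_ne_zero k)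
  have hk1 : (2*(k:ℝ)+2) ≠ 0 := by positivity
  have h4 : (4:ℝ) ^ k ≠ 0 := by positivity
  rw [pow_succ, pow_succ]
  field_simp
  ring

lemma abs_sqrtSeriesCoeff_antitone (k : ℕ) :
    |sqrtSeriesCoeff (k+1)| ≤ |sqrtSeriesCoeff k| := by
  rw [sqrtSeriesCoeff_succ, abs_mul]
  have h1 : |(-((2*(k:ℝ)+1) / (2*k+2)))| ≤ 1 := by
    rw [abs_neg, abs_div, abs_of_nonneg (by positivity : (0:ℝ) ≤ 2*(k:ℝ)+1),
      abs_of_nonneg (by positivity : (0:ℝ) ≤ 2*(k:ℝ)+2), div_le_one (by positivity)]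
    linarith
  calc |sqrtSeriesCoeff k| * |(-((2*(k:ℝ)+1) / (2*k+2)))| ≤ |sqrtSeriesCoeff k| * 1 :=
        mul_le_mul_of_nonneg_left h1 (abs_nonneg _)
    _ = |sqrtSeriesCoeff k| := mul_one _

section Analytic

variable {t : ℝ}

lemma summable_sqrtSeries (ht : |t| < 1) :
    Summable (fun k => |sqrtSeriesCoeff k * t ^ k|) := by
  apply Summable.of_nonneg_of_le (fun k => abs_nonneg _)
    (fun k => ?_) (summable_geometric_of_lt_one (abs_nonneg t) ht)
  rw [abs_mul, abs_pow]
  calc |sqrtSeriesCoeff k| * |t| ^ k ≤ 1 * |t| ^ k := by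
        exact mul_le_mul_of_nonneg_right (abs_sqrtSeriesCoeff_le_one k) (by positivity)
    _ = |t| ^ k := one_mul _

lemma sq_tsum_sqrtSeries (ht : |t| < 1) :
    (∑' k : ℕ, sqrtSeriesCoeff k * t ^ k) ^ 2 = (1 + t)⁻¹ := by
  have hs := summable_sqrtSeries ht
  have hs' : Summable fun k => ‖sqrtSeriesCoeff k * t ^ k‖ := by simpa only [Real.norm_eq_abs] using hs
  rw [sq, tsum_mul_tsum_eq_tsum_sum_antidiagonal_of_summable_norm hs' hs']
  have : ∀ n : ℕ, ∑ ij ∈ antidiagonal n,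
      (sqrtSeriesCoeff ij.1 * t ^ ij.1) * (sqrtSeriesCoeff ij.2 * t ^ ij.2) = (-t) ^ n := by
    intro n
    have : ∀ ij ∈ antidiagonal n, (sqrtSeriesCoeff ij.1 * t ^ ij.1) *
        (sqrtSeriesCoeff ij.2 * t ^ ij.2) = (sqrtSeriesCoeff ij.1 * sqrtSeriesCoeff ij.2) * t ^ n := by
      intro ij hij
      rw [Finset.HasAntidiagonal.mem_antidiagonal] at hij
      rw [← hij]; ring
    rw [Finset.sum_congr rfl this, ← Finset.sum_mul, sqrtSeriesCoeff_conv, neg_pow]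
    ring
  rw [tsum_congr this, tsum_geometric_of_abs_lt_one (by rwa [abs_neg])]
  rw [sub_neg_eq_add]

lemma tsum_sqrtSeries_pos (ht0 : 0 ≤ t) (ht : t < 1) :
    0 < ∑' k : ℕ, sqrtSeriesCoeff k * t ^ k := by
  have habs : |t| < 1 := by rwa [abs_of_nonneg ht0]
  have hs : Summable (fun k => sqrtSeriesCoeff k * t ^ k) :=
    (summable_sqrtSeries habs).of_abs
  have he : Summable (fun k => sqrtSeriesCoeff (2*k) * t ^ (2*k)) :=
    hs.comp_injective (fun a b h => by omega)
  have ho : Summable (fun k => sqrtSeriesCoeff (2*k+1) * t ^ (2*k+1)) :=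
    hs.comp_injective (fun a b h => by omega)
  have hkey : (∑' k : ℕ, sqrtSeriesCoeff (2*k) * t ^ (2*k)) +
      (∑' k : ℕ, sqrtSeriesCoeff (2*k+1) * t ^ (2*k+1)) =
      ∑' k : ℕ, sqrtSeriesCoeff k * t ^ k :=
    tsum_even_add_odd (f := fun k => sqrtSeriesCoeff k * t ^ k) he ho
  have h1 : ∑' k : ℕ, (sqrtSeriesCoeff (2*k) * t ^ (2*k) +
      sqrtSeriesCoeff (2*k+1) * t ^ (2*k+1)) =
      (∑' k : ℕ, sqrtSeriesCoeff (2*k) * t ^ (2*k)) +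
      (∑' k : ℕ, sqrtSeriesCoeff (2*k+1) * t ^ (2*k+1)) := Summable.tsum_add he ho
  have key : ∀ k : ℕ, 0 ≤ sqrtSeriesCoeff (2*k) * t ^ (2*k) +
      sqrtSeriesCoeff (2*k+1) * t ^ (2*k+1) := by
    intro k
    have h1' : sqrtSeriesCoeff (2*k) = |sqrtSeriesCoeff (2*k)| := by
      rw [abs_sqrtSeriesCoeff, sqrtSeriesCoeff, pow_mul]; norm_num
    have h2' : sqrtSeriesCoeff (2*k+1) = -|sqrtSeriesCoeff (2*k+1)| := by
      rw [abs_sqrtSeriesCoeff, sqrtSeriesCoeff, pow_succ, pow_mul]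
      norm_num
      ring
    rw [h1', h2']
    have : |sqrtSeriesCoeff (2*k+1)| * t ^ (2*k+1) ≤ |sqrtSeriesCoeff (2*k)| * t ^ (2*k) := by
      apply mul_le_mul (abs_sqrtSeriesCoeff_antitone (2*k))
        (by
          rw [pow_succ]
          calc t ^ (2*k) * t ≤ t ^ (2*k) * 1 :=
                mul_le_mul_of_nonneg_left ht.le (by positivity)
            _ = t ^ (2*k) := mul_one _)
        (by positivity) (abs_nonneg _)
    linarith
  have hsum : Summable (fun k : ℕ => sqrtSeriesCoeff (2*k) * t ^ (2*k) +
      sqrtSeriesCoeff (2*k+1) * t ^ (2*k+1)) := he.add ho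
  have hpos : 0 < ∑' k : ℕ, (sqrtSeriesCoeff (2*k) * t ^ (2*k) +
      sqrtSeriesCoeff (2*k+1) * t ^ (2*k+1)) := by
    apply Summable.tsum_pos hsum key 0
    have h10 : sqrtSeriesCoeff 0 = 1 := by simp [sqrtSeriesCoeff]
    have h20 : sqrtSeriesCoeff 1 = -(1/2) := by
      rw [sqrtSeriesCoeff]; norm_num [Nat.factorial]
    simp only [mul_zero, pow_zero, mul_one, h10, h20, pow_one]
    norm_num
    linarith
  linarith

lemma tsum_sqrtSeries_eq (ht0 : 0 ≤ t) (ht : t < 1) :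
    ∑' k : ℕ, sqrtSeriesCoeff k * t ^ k = (Real.sqrt (1 + t))⁻¹ := by
  have habs : |t| < 1 := by rwa [abs_of_nonneg ht0]
  have hpos := tsum_sqrtSeries_pos ht0 ht
  have hsq := sq_tsum_sqrtSeries habs
  have h1t : (0:ℝ) < 1 + t := by linarith
  have : Real.sqrt ((∑' k : ℕ, sqrtSeriesCoeff k * t ^ k) ^ 2) = Real.sqrt ((1+t)⁻¹) := by
    rw [hsq]
  rwa [Real.sqrt_sq hpos.le, Real.sqrt_inv] at this

end Analytic

lemma sqrt_term_eq (x : ℝ) (k : ℕ) :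
    ((-1) ^ (k + 1 + 1) * (Nat.factorial (2 * (k + 1) - 1) : ℝ) /
        (2 ^ (2 * (k + 1) - 1) * (Nat.factorial (k + 1 - 1)) * (Nat.factorial (k + 1)))) *
      x ^ (2 * (k + 1) - 1) = -(sqrtSeriesCoeff (k+1) * x ^ (2*k+1)) := by
  have h1 : 2 * (k + 1) - 1 = 2*k+1 := by omega
  have h2 : k + 1 - 1 = k := by omega
  rw [h1, h2, sqrtSeriesCoeff]
  have hf1 : ((2*(k+1)).factorial : ℝ) = (2*(k:ℝ)+2) * (2*k+1) * ((2*k).factorial : ℕ) := by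
    rw [show 2*(k+1) = 2*k+1+1 by ring, Nat.factorial_succ, Nat.factorial_succ]
    push_cast; ring
  have hf2 : (((k+1).factorial : ℕ) : ℝ) = ((k:ℝ)+1) * (k.factorial : ℕ) := by
    rw [Nat.factorial_succ]; push_cast; ring
  have hf3 : (((2*k+1).factorial : ℕ) : ℝ) = (2*(k:ℝ)+1) * ((2*k).factorial : ℕ) := by
    rw [Nat.factorial_succ]; push_cast; ring
  rw [hf1, hf2, hf3]
  have hk : ((k.factorial : ℕ) : ℝ) ≠ 0 := Nat.cast_ne_zero.mpr (Nat.factorial_ne_zero k)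
  have h4 : (4:ℝ) ^ (k+1) = 2 * 2 ^ (2*k+1) := by
    rw [show (4:ℝ) = 2^2 by norm_num, ← pow_mul, show 2*(k+1) = 2*k+1+1 by ring, pow_succ]
    ring
  rw [h4]
  have h2p : (2:ℝ) ^ (2*k+1) ≠ 0 := by positivity
  have hk1 : ((k:ℝ)+1) ≠ 0 := by positivity
  rw [pow_succ]
  field_simp

/-- For `0 < |x| < 1`,
`(√(1+x²) − 1) / (x √(1+x²)) = Σ_{k≥1} ((-1)^{k+1} (2k−1)! / (2^{2k−1} (k−1)! k!)) x^{2k−1}`,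
the series converging absolutely. -/
theorem sqrt_ratio_series (x : ℝ) (hx0 : 0 < |x|) (hx1 : |x| < 1) :
    Summable (fun k : ℕ =>
      |((-1) ^ (k + 1 + 1) * (Nat.factorial (2 * (k + 1) - 1) : ℝ) /
          (2 ^ (2 * (k + 1) - 1) * (Nat.factorial (k + 1 - 1)) * (Nat.factorial (k + 1)))) *
        x ^ (2 * (k + 1) - 1)|) ∧
    (Real.sqrt (1 + x ^ 2) - 1) / (x * Real.sqrt (1 + x ^ 2)) =
      ∑' k : ℕ, ((-1) ^ (k + 1 + 1) * (Nat.factorial (2 * (k + 1) - 1) : ℝ) /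
          (2 ^ (2 * (k + 1) - 1) * (Nat.factorial (k + 1 - 1)) * (Nat.factorial (k + 1)))) *
        x ^ (2 * (k + 1) - 1) := by
  have hx : x ≠ 0 := abs_pos.mp hx0
  have ht0 : (0:ℝ) ≤ x^2 := sq_nonneg x
  have ht1 : x^2 < 1 := by
    rw [← sq_abs]
    nlinarith
  have habs : |x^2| < 1 := by rwa [abs_of_nonneg ht0]
  have hsum0 := summable_sqrtSeries (t := x^2) habs
  have hg : Summable (fun k => sqrtSeriesCoeff k * (x^2)^k) := hsum0.of_abs
  have hmain : ∑' k : ℕ, sqrtSeriesCoeff k * (x^2)^k = (Real.sqrt (1+x^2))⁻¹ :=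
    tsum_sqrtSeries_eq ht0 ht1
  constructor
  · apply Summable.of_nonneg_of_le (fun k => abs_nonneg _) (fun k => ?_)
      (summable_geometric_of_lt_one (abs_nonneg x) hx1)
    rw [sqrt_term_eq, abs_neg, abs_mul, abs_pow]
    calc |sqrtSeriesCoeff (k+1)| * |x| ^ (2*k+1) ≤ 1 * |x| ^ (2*k+1) :=
          mul_le_mul_of_nonneg_right (abs_sqrtSeriesCoeff_le_one _) (by positivity)
      _ = |x| ^ (2*k+1) := one_mul _
      _ ≤ |x| ^ k := pow_le_pow_of_le_one (abs_nonneg x) hx1.le (by omega)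
  · have hg1 : Summable (fun k => sqrtSeriesCoeff (k+1) * (x^2)^(k+1)) :=
      hg.comp_injective (fun a b h => by omega)
    have hshift := Summable.tsum_eq_zero_add hg
    have hg0 : sqrtSeriesCoeff 0 * (x^2)^0 = 1 := by simp [sqrtSeriesCoeff]
    rw [hg0, hmain] at hshift
    have hterm : ∀ k : ℕ, ((-1) ^ (k + 1 + 1) * (Nat.factorial (2 * (k + 1) - 1) : ℝ) /
        (2 ^ (2 * (k + 1) - 1) * (Nat.factorial (k + 1 - 1)) * (Nat.factorial (k + 1)))) *
        x ^ (2 * (k + 1) - 1) = (-x⁻¹) * (sqrtSeriesCoeff (k+1) * (x^2)^(k+1)) := by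
      intro k
      rw [sqrt_term_eq]
      have hpow : (x^2)^(k+1) = x ^ (2*k+1) * x := by
        rw [← pow_mul, show 2*(k+1) = 2*k+1+1 by ring, pow_succ]
      rw [hpow]
      field_simp
    have h5 : ∑' k : ℕ, sqrtSeriesCoeff (k+1) * (x^2)^(k+1) =
        (Real.sqrt (1+x^2))⁻¹ - 1 := by linarith [hshift]
    rw [tsum_congr hterm, tsum_mul_left, h5]
    have hsqrt : (0:ℝ) < Real.sqrt (1+x^2) := Real.sqrt_pos.2 (by positivity)
    field_simp
    ring
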